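/- Let α > 0, ε > 0 and 0 < s < d. Let h_ε^{-1} : ℝ → ℝ denote the inverse of the strictly increasing bijection h_ε(γ) = γ·exp((γ² − α²)/(2ε)). Then there exists a unique constant C ∈ (s²/2, d²/2) such that ∫_s^d h_ε^{-1}(C − t²/2) dt = 0. -/

import Mathlib

theorem stmt_15 (α ε s d : ℝ) (hα : 0 < α) (hε : 0 < ε) (hs : 0 < s) (hsd : s < d)
    (h hinv : ℝ → ℝ)
    (hh : ∀ γ : ℝ, h γ = γ * Real.exp ((γ ^ 2 - α ^ 2) / (2 * ε)))
    (hinv_left : Function.LeftInverse hinv h)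
    (hinv_right : Function.RightInverse hinv h) :
    ∃! C : ℝ, C ∈ Set.Ioo (s ^ 2 / 2) (d ^ 2 / 2) ∧
      (∫ t in s..d, hinv (C - t ^ 2 / 2)) = 0 := by
  have hfun : h = fun γ => γ * Real.exp ((γ ^ 2 - α ^ 2) / (2 * ε)) := funext hh
  -- derivative of h
  have hderiv : ∀ x : ℝ, HasDerivAt h
      (Real.exp ((x ^ 2 - α ^ 2) / (2 * ε)) * (1 + x ^ 2 / ε)) x := by
    intro x
    rw [hfun]
    have hu : HasDerivAt (fun γ : ℝ => (γ ^ 2 - α ^ 2) / (2 * ε)) (2 * x / (2 * ε)) x := by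
      simpa using (((hasDerivAt_pow 2 x).sub_const (α ^ 2)).div_const (2 * ε))
    have he : HasDerivAt (fun γ : ℝ => Real.exp ((γ ^ 2 - α ^ 2) / (2 * ε)))
        (Real.exp ((x ^ 2 - α ^ 2) / (2 * ε)) * (2 * x / (2 * ε))) x := hu.exp
    have := (hasDerivAt_id' x).fun_mul he
    refine this.congr_deriv ?_
    field_simp
  have hmono : StrictMono h := by
    apply strictMono_of_deriv_pos
    intro x
    rw [(hderiv x).deriv]
    positivity
  have hsurj : Function.Surjective h := hinv_right.surjective
  set e : ℝ ≃o ℝ := StrictMono.orderIsoOfSurjective h hmono hsurj with he_def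
  have hinv_eq : hinv = ⇑e.symm := by
    funext y
    apply hmono.injective
    rw [hinv_right y]
    exact (e.apply_symm_apply y).symm
  have hinv_cont : Continuous hinv := by rw [hinv_eq]; exact e.symm.continuous
  have hinv_mono : StrictMono hinv := by rw [hinv_eq]; exact e.symm.strictMono
  have h0 : h 0 = 0 := by simp [hh]
  have hinv0 : hinv 0 = 0 := by have := hinv_left 0; rwa [h0] at this
  set F : ℝ → ℝ := fun C => ∫ t in s..d, hinv (C - t ^ 2 / 2) with hF_def
  have hcont_inner : ∀ C : ℝ, Continuous (fun t : ℝ => hinv (C - t ^ 2 / 2)) := by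
    intro C
    exact hinv_cont.comp (by continuity)
  have hint : ∀ C : ℝ, IntervalIntegrable (fun t : ℝ => hinv (C - t ^ 2 / 2)) MeasureTheory.volume s d :=
    fun C => (hcont_inner C).intervalIntegrable s d
  have hFcont : Continuous F := by
    apply intervalIntegral.continuous_parametric_intervalIntegral_of_continuous'
      (f := fun C t => hinv (C - t ^ 2 / 2))
    exact hinv_cont.comp (continuous_fst.sub ((continuous_snd.pow 2).div_const 2))
  have hFmono : StrictMono F := by
    intro C₁ C₂ hC
    have hpos : 0 < ∫ t in s..d,
        (hinv (C₂ - t ^ 2 / 2) - hinv (C₁ - t ^ 2 / 2)) := by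
      apply intervalIntegral.intervalIntegral_pos_of_pos_on ((hint C₂).sub (hint C₁))
        _ hsd
      intro t _
      have : hinv (C₁ - t ^ 2 / 2) < hinv (C₂ - t ^ 2 / 2) := hinv_mono (by linarith)
      linarith
    rw [intervalIntegral.integral_sub (hint C₂) (hint C₁)] at hpos
    simp only [hF_def]
    linarith
  have hFneg : F (s ^ 2 / 2) < 0 := by
    have hpos : 0 < ∫ t in s..d, (-(hinv (s ^ 2 / 2 - t ^ 2 / 2))) := by
      apply intervalIntegral.intervalIntegral_pos_of_pos_on ((hint _).neg) _ hsd
      intro t ht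
      have harg : s ^ 2 / 2 - t ^ 2 / 2 < 0 := by nlinarith [ht.1, ht.2]
      have : hinv (s ^ 2 / 2 - t ^ 2 / 2) < hinv 0 := hinv_mono harg
      rw [hinv0] at this
      simp only [Pi.neg_apply]
      linarith
    rw [intervalIntegral.integral_neg] at hpos
    simpa [hF_def] using by linarith
  have hFpos : 0 < F (d ^ 2 / 2) := by
    apply intervalIntegral.intervalIntegral_pos_of_pos_on (hint _) _ hsd
    intro t ht
    have harg : 0 < d ^ 2 / 2 - t ^ 2 / 2 := by nlinarith [ht.1, ht.2]
    have : hinv 0 < hinv (d ^ 2 / 2 - t ^ 2 / 2) := hinv_mono harg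
    rwa [hinv0] at this
  have hle : s ^ 2 / 2 ≤ d ^ 2 / 2 := by nlinarith
  have hsub := intermediate_value_Ioo hle hFcont.continuousOn
  have h0mem : (0 : ℝ) ∈ Set.Ioo (F (s ^ 2 / 2)) (F (d ^ 2 / 2)) := ⟨hFneg, hFpos⟩
  obtain ⟨C, hCmem, hFC⟩ := hsub h0mem
  refine ⟨C, ⟨hCmem, hFC⟩, ?_⟩
  rintro C' ⟨_, hF'⟩
  exact hFmono.injective (hF'.trans hFC.symm)
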